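/- arXiv:1508.03154 — 2 statements merged into one kernel-verified Lean document; each statement's English description precedes it below -/
import Mathlib

section
/- Suppose f is irreducible in ℤ[u^{±1}], noncyclotomic, and hyperbolic. Let ‖f‖₁ = Σ_k |f_k| and V = {v ∈ ℓ^∞(ℤ,ℤ) : ‖v‖_∞ ≤ ‖f‖₁}. Then ξ(V) = X_f, i.e. every point of X_f is of the form Σ_{n∈ℤ} v_n α_f^{−n}(x^Δ) for some integer sequence v with |v_n| ≤ ‖f‖₁ for all n. -/
open Filter Topology Polynomial

noncomputable section

/-- The circle `ℝ/ℤ`. -/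
abbrev Torus := AddCircle (1 : ℝ)

/-- `f(σ)` acting on `𝕋^ℤ`. -/
def fsT (f : Polynomial ℤ) (x : ℤ → Torus) : ℤ → Torus :=
  fun n => ∑ k ∈ Finset.range (f.natDegree + 1), f.coeff k • x (n + (k : ℤ))

/-- `X_f = ker f(σ) ⊆ 𝕋^ℤ`. -/
def Xf (f : Polynomial ℤ) : Set (ℤ → Torus) := {x | ∀ n, fsT f x n = 0}

/-- `f(σ̄)` on real sequences. -/
def fsR (f : Polynomial ℤ) (w : ℤ → ℝ) : ℤ → ℝ :=
  fun n => ∑ k ∈ Finset.range (f.natDegree + 1), (f.coeff k : ℝ) * w (n + (k : ℤ))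

/-- Bounded real sequences. -/
def Bdd (w : ℤ → ℝ) : Prop := ∃ B : ℝ, ∀ n, |w n| ≤ B

/-- The sequence `v^Δ`. -/
def vDelta : ℤ → ℝ := fun n => if n = 0 then 1 else 0

/-- Coordinatewise reduction mod 1. -/
def rhoT (w : ℤ → ℝ) : ℤ → Torus := fun n => (w n : Torus)

/-- `f` is noncyclotomic. -/
def Noncyclotomic (f : Polynomial ℤ) : Prop :=
  ∀ θ : ℂ, Polynomial.aeval θ f = 0 → ∀ n : ℕ, 0 < n → θ ^ n ≠ 1

/-- `w^Δ`. -/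
def IsWdelta (f : Polynomial ℤ) (w : ℤ → ℝ) : Prop :=
  Bdd w ∧ fsR f w = vDelta ∧ Tendsto w cofinite (nhds 0)

/-- `ξ̄(v)_k = ∑_{n∈ℤ} v_n w^Δ_{k-n}`. -/
def xiBar (wd : ℤ → ℝ) (v : ℤ → ℤ) : ℤ → ℝ :=
  fun k => ∑' n : ℤ, (v n : ℝ) * wd (k - n)

/-- `‖f‖₁ = ∑_k |f_k|`. -/
def norm1 (f : Polynomial ℤ) : ℤ :=
  ∑ k ∈ Finset.range (f.natDegree + 1), |f.coeff k|

/-! ### Auxiliary development -/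

/-- The shift on complex sequences. -/
def SS : Module.End ℂ (ℤ → ℂ) :=
  { toFun := fun w n => w (n + 1)
    map_add' := fun _ _ => rfl
    map_smul' := fun _ _ => rfl }

lemma SS_pow (k : ℕ) (w : ℤ → ℂ) (n : ℤ) : (SS ^ k) w n = w (n + k) := by
  induction k generalizing n with
  | zero => simp
  | succ k ih =>
    rw [pow_succ', Module.End.mul_apply]
    show (SS^k) w (n+1) = _
    rw [ih]
    congr 1; push_cast; ring

lemma aeval_SS_apply (p : ℂ[X]) (w : ℤ → ℂ) (n : ℤ) :
    (Polynomial.aeval SS p) w n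
      = ∑ k ∈ Finset.range (p.natDegree + 1), p.coeff k * w (n + k) := by
  rw [Polynomial.aeval_eq_sum_range]
  rw [LinearMap.sum_apply]
  rw [Finset.sum_apply]
  refine Finset.sum_congr rfl fun k _ => ?_
  rw [LinearMap.smul_apply]
  simp [SS_pow, Pi.smul_apply, smul_eq_mul]

/-- Bounded complex sequences. -/
def BddC (w : ℤ → ℂ) : Prop := ∃ B : ℝ, 0 ≤ B ∧ ∀ n, ‖w n‖ ≤ B

/-- Exponentially decaying complex sequences. -/
def Dec (w : ℤ → ℂ) : Prop :=
  ∃ C r : ℝ, 0 ≤ C ∧ 0 < r ∧ r < 1 ∧ ∀ n : ℤ, ‖w n‖ ≤ C * r ^ n.natAbs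

lemma Dec.bddC {w : ℤ → ℂ} (h : Dec w) : BddC w := by
  obtain ⟨C, r, hC, hr0, hr1, hw⟩ := h
  refine ⟨C, hC, fun n => (hw n).trans ?_⟩
  calc C * r ^ n.natAbs ≤ C * 1 :=
        mul_le_mul_of_nonneg_left (pow_le_one₀ hr0.le hr1.le) hC
    _ = C := mul_one C

lemma Dec.const_mul {w : ℤ → ℂ} (c : ℂ) (h : Dec w) : Dec (fun n => c * w n) := by
  obtain ⟨C, r, hC, hr0, hr1, hw⟩ := h
  refine ⟨‖c‖ * C, r, by positivity, hr0, hr1, fun n => ?_⟩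
  rw [norm_mul, mul_assoc]
  exact mul_le_mul_of_nonneg_left (hw n) (norm_nonneg c)

lemma key_bound (q r : ℝ) (hq0 : 0 ≤ q) (hq1 : q < 1) (hr0 : 0 < r) (hr1 : r < 1) :
    ∃ ρ : ℝ, 0 < ρ ∧ ρ < 1 ∧ ∀ j a m : ℕ, j + m ≤ 2 * (j + a) + 1 →
      q ^ j * r ^ a ≤ ρ ^ j * ρ ^ m / ρ := by
  set s : ℝ := max q r with hs
  have hs0 : 0 < s := lt_of_lt_of_le hr0 (le_max_right _ _)
  have hs1 : s < 1 := max_lt hq1 hr1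
  refine ⟨Real.sqrt s, Real.sqrt_pos.2 hs0, ?_, ?_⟩
  · rw [show (1:ℝ) = Real.sqrt 1 by simp]
    exact Real.sqrt_lt_sqrt hs0.le hs1
  · intro j a m hjam
    set ρ := Real.sqrt s with hρ
    have hρ0 : 0 < ρ := Real.sqrt_pos.2 hs0
    have hρ1 : ρ ≤ 1 := by
      rw [hρ, show (1:ℝ) = Real.sqrt 1 by simp]
      exact Real.sqrt_le_sqrt hs1.le
    have hsq : ρ ^ 2 = s := Real.sq_sqrt hs0.le
    have h1 : q ^ j * r ^ a ≤ s ^ (j + a) := by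
      rw [pow_add]
      exact mul_le_mul (pow_le_pow_left₀ hq0 (le_max_left _ _) j)
        (pow_le_pow_left₀ hr0.le (le_max_right _ _) a) (pow_nonneg hr0.le a)
        (pow_nonneg hs0.le j)
    have h2 : s ^ (j + a) = ρ ^ (2 * (j + a)) := by
      rw [pow_mul, hsq]
    have h3 : ρ ^ (2 * (j + a)) * ρ ≤ ρ ^ (j + m) := by
      rw [← pow_succ]
      exact pow_le_pow_of_le_one hρ0.le hρ1 (by omega)
    calc q ^ j * r ^ a ≤ ρ ^ (2 * (j+a)) := h1.trans_eq h2
      _ = ρ ^ (2 * (j+a)) * ρ / ρ := by field_simp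
      _ ≤ ρ ^ (j + m) / ρ := by gcongr
      _ = ρ ^ j * ρ ^ m / ρ := by rw [pow_add]

lemma first_solve (l : ℂ) (hl : ‖l‖ ≠ 1) (v : ℤ → ℂ) (hv : Dec v) :
    ∃ y : ℤ → ℂ, Dec y ∧ ∀ n, y (n + 1) - l * y n = v n := by
  obtain ⟨C, r, hC, hr0, hr1, hvb⟩ := hv
  rcases lt_or_gt_of_ne hl with hlt | hgt
  · -- |l| < 1
    obtain ⟨ρ, hρ0, hρ1, hkey⟩ := key_bound ‖l‖ r (norm_nonneg l) hlt hr0 hr1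
    have hterm : ∀ n : ℤ, ∀ j : ℕ, ‖l ^ j * v (n - 1 - j)‖ ≤ C * (ρ ^ (n.natAbs) / ρ) * ρ ^ j := by
      intro n j
      rw [norm_mul, norm_pow]
      calc ‖l‖ ^ j * ‖v (n - 1 - j)‖ ≤ ‖l‖ ^ j * (C * r ^ (n - 1 - (j:ℤ)).natAbs) := by
            exact mul_le_mul_of_nonneg_left (hvb _) (pow_nonneg (norm_nonneg l) j)
        _ = C * (‖l‖ ^ j * r ^ (n - 1 - (j:ℤ)).natAbs) := by ring
        _ ≤ C * (ρ ^ j * ρ ^ n.natAbs / ρ) := by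
            refine mul_le_mul_of_nonneg_left (hkey j _ _ ?_) hC
            omega
        _ = C * (ρ ^ n.natAbs / ρ) * ρ ^ j := by ring
    have hsum : ∀ n : ℤ, Summable (fun j : ℕ => l ^ j * v (n - 1 - j)) := by
      intro n
      refine Summable.of_norm_bounded ?_ (hterm n)
      exact (summable_geometric_of_lt_one hρ0.le hρ1).mul_left _
    refine ⟨fun n => ∑' j : ℕ, l ^ j * v (n - 1 - j), ?_, ?_⟩
    · have hρ1' : 0 < 1 - ρ := by linarith
      refine ⟨C / (ρ * (1 - ρ)), ρ, ?_, hρ0, hρ1, ?_⟩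
      · positivity
      · intro n
        calc ‖∑' j : ℕ, l ^ j * v (n - 1 - j)‖ ≤ ∑' j : ℕ, ‖l ^ j * v (n - 1 - j)‖ :=
              norm_tsum_le_tsum_norm (hsum n).norm
          _ ≤ ∑' j : ℕ, C * (ρ ^ (n.natAbs) / ρ) * ρ ^ j := by
              refine Summable.tsum_le_tsum (hterm n) ?_ ?_
              · exact (hsum n).norm
              · exact (summable_geometric_of_lt_one hρ0.le hρ1).mul_left _
          _ = C * (ρ ^ (n.natAbs) / ρ) * (1 - ρ)⁻¹ := by
              rw [tsum_mul_left, tsum_geometric_of_lt_one hρ0.le hρ1]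
          _ = C / (ρ * (1 - ρ)) * ρ ^ n.natAbs := by field_simp; try ring
    · intro n
      show (∑' j : ℕ, l ^ j * v (n + 1 - 1 - j)) - l * (∑' j : ℕ, l ^ j * v (n - 1 - j)) = v n
      have h1 : (fun j : ℕ => l ^ j * v (n + 1 - 1 - j)) = fun j : ℕ => l ^ j * v (n - j) := by
        funext j; congr 2; ring
      have h2 : Summable (fun j : ℕ => l ^ j * v (n - j)) := by rw [← h1]; exact hsum (n+1)
      have h3 : ∑' j : ℕ, l ^ j * v (n + 1 - 1 - j) = ∑' j : ℕ, l ^ j * v (n - j) := by rw [h1]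
      rw [h3, Summable.tsum_eq_zero_add h2]
      have h4 : ∀ j : ℕ, l ^ (j+1) * v (n - (j+1:ℕ)) = l * (l ^ j * v (n - 1 - j)) := by
        intro j
        have : n - ((j:ℤ)+1) = n - 1 - j := by ring
        rw [pow_succ]
        push_cast
        rw [this]
        ring
      simp only [pow_zero, one_mul, Nat.cast_zero, sub_zero]
      rw [tsum_congr h4, tsum_mul_left]
      ring
  · -- |l| > 1
    have hl0 : l ≠ 0 := by
      intro h; rw [h, norm_zero] at hgt; linarith
    have hinv : ‖l⁻¹‖ < 1 := by
      rw [norm_inv]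
      rw [inv_lt_one_iff₀]
      right; exact hgt
    obtain ⟨ρ, hρ0, hρ1, hkey⟩ := key_bound ‖l⁻¹‖ r (norm_nonneg _) hinv hr0 hr1
    have hterm : ∀ n : ℤ, ∀ j : ℕ, ‖l⁻¹ ^ (j+1) * v (n + j)‖ ≤ C * (ρ ^ (n.natAbs) / ρ) * ρ ^ j := by
      intro n j
      rw [norm_mul, norm_pow]
      calc ‖l⁻¹‖ ^ (j+1) * ‖v (n + j)‖ ≤ ‖l⁻¹‖ ^ j * ‖v (n + j)‖ := by
            refine mul_le_mul_of_nonneg_right ?_ (norm_nonneg _)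
            exact pow_le_pow_of_le_one (norm_nonneg _) hinv.le (by omega)
        _ ≤ ‖l⁻¹‖ ^ j * (C * r ^ (n + (j:ℤ)).natAbs) := by
            exact mul_le_mul_of_nonneg_left (hvb _) (pow_nonneg (norm_nonneg _) j)
        _ = C * (‖l⁻¹‖ ^ j * r ^ (n + (j:ℤ)).natAbs) := by ring
        _ ≤ C * (ρ ^ j * ρ ^ n.natAbs / ρ) := by
            refine mul_le_mul_of_nonneg_left (hkey j _ _ ?_) hC
            omega
        _ = C * (ρ ^ n.natAbs / ρ) * ρ ^ j := by ring
    have hsum : ∀ n : ℤ, Summable (fun j : ℕ => l⁻¹ ^ (j+1) * v (n + j)) := by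
      intro n
      refine Summable.of_norm_bounded ?_ (hterm n)
      exact (summable_geometric_of_lt_one hρ0.le hρ1).mul_left _
    refine ⟨fun n => -∑' j : ℕ, l⁻¹ ^ (j+1) * v (n + j), ?_, ?_⟩
    · have hρ1' : 0 < 1 - ρ := by linarith
      refine ⟨C / (ρ * (1 - ρ)), ρ, ?_, hρ0, hρ1, ?_⟩
      · positivity
      · intro n
        rw [norm_neg]
        calc ‖∑' j : ℕ, l⁻¹ ^ (j+1) * v (n + j)‖ ≤ ∑' j : ℕ, ‖l⁻¹ ^ (j+1) * v (n + j)‖ :=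
              norm_tsum_le_tsum_norm (hsum n).norm
          _ ≤ ∑' j : ℕ, C * (ρ ^ (n.natAbs) / ρ) * ρ ^ j := by
              refine Summable.tsum_le_tsum (hterm n) (hsum n).norm ?_
              exact (summable_geometric_of_lt_one hρ0.le hρ1).mul_left _
          _ = C * (ρ ^ (n.natAbs) / ρ) * (1 - ρ)⁻¹ := by
              rw [tsum_mul_left, tsum_geometric_of_lt_one hρ0.le hρ1]
          _ = C / (ρ * (1 - ρ)) * ρ ^ n.natAbs := by field_simp; try ring
    · intro n
      show (-∑' j : ℕ, l⁻¹ ^ (j+1) * v (n + 1 + j)) - l * (-∑' j : ℕ, l⁻¹ ^ (j+1) * v (n + j)) = v n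
      have hmain : l * ∑' j : ℕ, l⁻¹ ^ (j+1) * v (n + j)
          = v n + ∑' j : ℕ, l⁻¹ ^ (j+1) * v (n + 1 + j) := by
        rw [← tsum_mul_left]
        have h4 : ∀ j : ℕ, l * (l⁻¹ ^ (j+1) * v (n + j)) = l⁻¹ ^ j * v (n + j) := by
          intro j
          rw [pow_succ]
          field_simp
        rw [tsum_congr h4]
        have h5 : Summable (fun j : ℕ => l⁻¹ ^ j * v (n + j)) :=
          ((hsum n).mul_left l).congr h4
        rw [Summable.tsum_eq_zero_add h5]
        simp only [pow_zero, one_mul, Nat.cast_zero, add_zero]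
        congr 1
        refine tsum_congr fun j => ?_
        congr 2
        push_cast; ring
      linear_combination hmain

def opOf (l : ℂ) : Module.End ℂ (ℤ → ℂ) := SS - algebraMap ℂ _ l

lemma opOf_apply (l : ℂ) (w : ℤ → ℂ) (n : ℤ) : opOf l w n = w (n + 1) - l * w n := by
  simp [opOf, SS, Module.algebraMap_end_apply]

lemma first_inj (l : ℂ) (hl : ‖l‖ ≠ 1) (h : ℤ → ℂ) (hb : BddC h)
    (he : ∀ n, h (n + 1) = l * h n) : h = 0 := by
  obtain ⟨B, hB0, hB⟩ := hb
  have hiter : ∀ (k : ℕ) (n : ℤ), h (n + k) = l ^ k * h n := by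
    intro k
    induction k with
    | zero => simp
    | succ k ih =>
      intro n
      have : n + (k+1 : ℕ) = (n + k) + 1 := by push_cast; ring
      rw [this, he, ih, pow_succ]
      ring
  funext n
  rcases lt_or_gt_of_ne hl with hlt | hgt
  · have hle : ∀ k : ℕ, ‖h n‖ ≤ B * ‖l‖ ^ k := by
      intro k
      have := hiter k (n - k)
      have h2 : (n : ℤ) - k + k = n := by ring
      rw [h2] at this
      rw [this, norm_mul, norm_pow]
      calc ‖l‖ ^ k * ‖h (n - k)‖ ≤ ‖l‖ ^ k * B :=
            mul_le_mul_of_nonneg_left (hB _) (pow_nonneg (norm_nonneg _) k)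
        _ = B * ‖l‖ ^ k := by ring
    have hlim : Filter.Tendsto (fun k : ℕ => B * ‖l‖ ^ k) Filter.atTop (nhds 0) := by
      rw [show (0:ℝ) = B * 0 by ring]
      exact (tendsto_pow_atTop_nhds_zero_of_lt_one (norm_nonneg _) hlt).const_mul B
    have : ‖h n‖ ≤ 0 := ge_of_tendsto' hlim hle
    simpa using le_antisymm this (norm_nonneg _)
  · have hl0 : (0:ℝ) < ‖l‖ := lt_trans one_pos hgt
    have hle : ∀ k : ℕ, ‖h n‖ ≤ B * (‖l‖⁻¹) ^ k := by
      intro k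
      have := hiter k n
      have h3 : ‖l‖ ^ k * ‖h n‖ ≤ B := by
        rw [← norm_pow, ← norm_mul, ← this]; exact hB _
      rw [inv_pow, ← div_eq_mul_inv, le_div_iff₀ (pow_pos hl0 k)]
      nlinarith [h3]
    have hlim : Filter.Tendsto (fun k : ℕ => B * (‖l‖⁻¹) ^ k) Filter.atTop (nhds 0) := by
      rw [show (0:ℝ) = B * 0 by ring]
      refine (tendsto_pow_atTop_nhds_zero_of_lt_one (by positivity) ?_).const_mul B
      rw [inv_lt_one_iff₀]; right; exact hgt
    have : ‖h n‖ ≤ 0 := ge_of_tendsto' hlim hle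
    simpa using le_antisymm this (norm_nonneg _)

def POp (s : List ℂ) : Module.End ℂ (ℤ → ℂ) := (s.map opOf).prod

lemma POp_cons (l : ℂ) (s : List ℂ) (h : ℤ → ℂ) :
    POp (l :: s) h = opOf l (POp s h) := by
  simp [POp, List.map_cons, List.prod_cons, Module.End.mul_apply]

lemma BddC_opOf (l : ℂ) (h : ℤ → ℂ) (hb : BddC h) : BddC (opOf l h) := by
  obtain ⟨B, hB0, hB⟩ := hb
  refine ⟨B + ‖l‖ * B, by positivity, fun n => ?_⟩
  rw [opOf_apply]
  calc ‖h (n+1) - l * h n‖ ≤ ‖h (n+1)‖ + ‖l * h n‖ := norm_sub_le _ _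
    _ ≤ B + ‖l‖ * B := by
        rw [norm_mul]
        exact add_le_add (hB _) (mul_le_mul_of_nonneg_left (hB _) (norm_nonneg _))

lemma BddC_POp (s : List ℂ) (h : ℤ → ℂ) (hb : BddC h) : BddC (POp s h) := by
  induction s generalizing h with
  | nil => simpa [POp]
  | cons l s ih =>
    rw [POp_cons]
    exact BddC_opOf l _ (ih h hb)

lemma POp_inj (s : List ℂ) (hs : ∀ l ∈ s, ‖l‖ ≠ 1) (h : ℤ → ℂ) (hb : BddC h)
    (hz : POp s h = 0) : h = 0 := by
  induction s generalizing h with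
  | nil => simpa [POp] using hz
  | cons l s ih =>
    rw [POp_cons] at hz
    have hg : POp s h = 0 := by
      refine first_inj l (hs l List.mem_cons_self) _ (BddC_POp s h hb) fun n => ?_
      have := congrFun hz n
      rw [opOf_apply] at this
      simpa [sub_eq_zero] using this
    exact ih (fun x hx => hs x (List.mem_cons_of_mem _ hx)) h hb hg

lemma POp_solve (s : List ℂ) (hs : ∀ l ∈ s, ‖l‖ ≠ 1) (v : ℤ → ℂ) (hv : Dec v) :
    ∃ w : ℤ → ℂ, Dec w ∧ POp s w = v := by
  induction s generalizing v with
  | nil =>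
    refine ⟨v, hv, ?_⟩
    simp [POp]
  | cons l s ih =>
    obtain ⟨y, hy, hye⟩ := first_solve l (hs l List.mem_cons_self) v hv
    obtain ⟨w, hw, hwe⟩ := ih (fun x hx => hs x (List.mem_cons_of_mem _ hx)) y hy
    refine ⟨w, hw, ?_⟩
    rw [POp_cons, hwe]
    funext n
    rw [opOf_apply]
    exact hye n

def fCp (f : Polynomial ℤ) : Polynomial ℂ := f.map (Int.castRingHom ℂ)

lemma fC_ne_zero {f : Polynomial ℤ} (hlead : 0 < f.leadingCoeff) : fCp f ≠ 0 := by
  have hf0 : f ≠ 0 := fun h => by simp [h] at hlead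
  exact (Polynomial.map_ne_zero_iff (Int.cast_injective)).2 hf0

lemma lc_ne_zero {f : Polynomial ℤ} (hlead : 0 < f.leadingCoeff) : (fCp f).leadingCoeff ≠ 0 :=
  leadingCoeff_ne_zero.2 (fC_ne_zero hlead)

lemma fC_natDegree {f : Polynomial ℤ} : (fCp f).natDegree = f.natDegree :=
  natDegree_map_eq_of_injective Int.cast_injective f

lemma roots_norm {f : Polynomial ℤ} (hlead : 0 < f.leadingCoeff)
    (hhyp : ∀ θ : ℂ, Polynomial.aeval θ f = 0 → ‖θ‖ ≠ 1) :
    ∀ l ∈ (fCp f).roots.toList, ‖l‖ ≠ 1 := by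
  intro l hl
  rw [Multiset.mem_toList, mem_roots (fC_ne_zero hlead)] at hl
  have : Polynomial.aeval l f = 0 := by
    rw [Polynomial.aeval_def, ← Polynomial.eval_map]
    rw [algebraMap_int_eq]
    exact hl
  exact hhyp l this

lemma fC_factor {f : Polynomial ℤ} (hlead : 0 < f.leadingCoeff) :
    Polynomial.aeval SS (fCp f)
      = algebraMap ℂ (Module.End ℂ (ℤ → ℂ)) (fCp f).leadingCoeff * POp (fCp f).roots.toList := by
  have hsplit : fCp f = C (fCp f).leadingCoeff *
      ((fCp f).roots.map fun a => X - C a).prod :=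
    (IsAlgClosed.splits _).eq_prod_roots
  have hlist : ((fCp f).roots.map fun a => X - C a).prod
      = ((fCp f).roots.toList.map fun a => X - C a).prod := by
    conv_lhs => rw [← Multiset.coe_toList (fCp f).roots]
    rw [Multiset.map_coe, Multiset.prod_coe]
  conv_lhs => rw [hsplit, hlist]
  rw [map_mul, aeval_C]
  congr 1
  rw [map_list_prod, List.map_map]
  refine congrArg List.prod (List.map_congr_left fun a _ => ?_)
  show Polynomial.aeval SS ((X : ℂ[X]) - C a) = opOf a
  rw [map_sub, aeval_X, aeval_C]
  rfl

/-- `f(σ̄)` computed on the complexification of a real sequence. -/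
lemma fsR_cast (f : Polynomial ℤ) (h : ℤ → ℝ) (n : ℤ) :
    ((fsR f h n : ℝ) : ℂ) = Polynomial.aeval SS (fCp f) (fun m => ((h m : ℝ) : ℂ)) n := by
  rw [aeval_SS_apply, fC_natDegree, fsR]
  push_cast
  refine Finset.sum_congr rfl fun k _ => ?_
  rw [fCp, coeff_map]
  simp

/-- Injectivity of `f(σ̄)` on bounded real sequences. -/
lemma fsR_inj (f : Polynomial ℤ) (hlead : 0 < f.leadingCoeff)
    (hhyp : ∀ θ : ℂ, Polynomial.aeval θ f = 0 → ‖θ‖ ≠ 1)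
    (h : ℤ → ℝ) (hb : Bdd h) (hz : ∀ n, fsR f h n = 0) : h = 0 := by
  obtain ⟨B, hB⟩ := hb
  set hc : ℤ → ℂ := fun m => ((h m : ℝ) : ℂ) with hhc
  have hbc : BddC hc := by
    refine ⟨max B 0, le_max_right _ _, fun n => ?_⟩
    rw [hhc]
    simp only [Complex.norm_real, Real.norm_eq_abs]
    exact (hB n).trans (le_max_left _ _)
  have hzc : Polynomial.aeval SS (fCp f) hc = 0 := by
    funext n
    rw [← fsR_cast, hz n]
    simp
  rw [fC_factor hlead] at hzc
  rw [Module.End.mul_apply, Module.algebraMap_end_apply] at hzc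
  have hP : POp (fCp f).roots.toList hc = 0 :=
    (smul_eq_zero.mp hzc).resolve_left (lc_ne_zero hlead)
  have := POp_inj _ (roots_norm hlead hhyp) hc hbc hP
  funext n
  have := congrFun this n
  simpa [hhc] using this

/-- The fundamental decay estimate for `w^Δ`. -/
lemma wd_dec (f : Polynomial ℤ) (hlead : 0 < f.leadingCoeff)
    (hhyp : ∀ θ : ℂ, Polynomial.aeval θ f = 0 → ‖θ‖ ≠ 1)
    (wd : ℤ → ℝ) (hwd : IsWdelta f wd) :
    ∃ C r : ℝ, 0 ≤ C ∧ 0 < r ∧ r < 1 ∧ ∀ n : ℤ, |wd n| ≤ C * r ^ n.natAbs := by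
  set wc : ℤ → ℂ := fun m => ((wd m : ℝ) : ℂ) with hwc
  set vc : ℤ → ℂ := fun m => ((vDelta m : ℝ) : ℂ) with hvc
  have hvcdec : Dec vc := by
    refine ⟨1, 1/2, zero_le_one, by norm_num, by norm_num, fun n => ?_⟩
    rw [hvc]
    rcases eq_or_ne n 0 with h | h
    · simp [vDelta, h]
    · simp only [vDelta, if_neg h, Complex.ofReal_zero, norm_zero]
      positivity
  obtain ⟨w0, hw0dec, hw0⟩ := POp_solve _ (roots_norm hlead hhyp) vc hvcdec
  set lc := (fCp f).leadingCoeff with hlc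
  set ws : ℤ → ℂ := fun n => lc⁻¹ * w0 n with hws
  have hwsdec : Dec ws := hw0dec.const_mul lc⁻¹
  have hwseval : Polynomial.aeval SS (fCp f) ws = vc := by
    rw [fC_factor hlead, Module.End.mul_apply, Module.algebraMap_end_apply]
    have : ws = lc⁻¹ • w0 := by funext n; simp [hws, Pi.smul_apply, smul_eq_mul]
    rw [this, map_smul, hw0, smul_smul]
    rw [mul_inv_cancel₀ (lc_ne_zero hlead)]
    simp
  have hwceval : Polynomial.aeval SS (fCp f) wc = vc := by
    funext n
    rw [hwc, ← fsR_cast, hwd.2.1]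
  have hdiff : wc = ws := by
    have hbd : BddC (fun n => wc n - ws n) := by
      obtain ⟨B1, hB1⟩ := hwd.1
      obtain ⟨B2, hB20, hB2⟩ := hwsdec.bddC
      refine ⟨max B1 0 + B2, by positivity, fun n => ?_⟩
      calc ‖wc n - ws n‖ ≤ ‖wc n‖ + ‖ws n‖ := norm_sub_le _ _
        _ ≤ max B1 0 + B2 := by
            refine add_le_add ?_ (hB2 n)
            simp only [hwc, Complex.norm_real, Real.norm_eq_abs]
            exact (hB1 n).trans (le_max_left _ _)
    have hz : Polynomial.aeval SS (fCp f) (fun n => wc n - ws n) = 0 := by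
      have : (fun n => wc n - ws n) = wc - ws := rfl
      rw [this, map_sub, hwceval, hwseval, sub_self]
    rw [fC_factor hlead, Module.End.mul_apply, Module.algebraMap_end_apply] at hz
    have hP : POp (fCp f).roots.toList (fun n => wc n - ws n) = 0 :=
      (smul_eq_zero.mp hz).resolve_left (lc_ne_zero hlead)
    have := POp_inj _ (roots_norm hlead hhyp) _ hbd hP
    funext n
    have := congrFun this n
    simpa [sub_eq_zero] using this
  obtain ⟨C, r, hC, hr0, hr1, hb⟩ := hwsdec
  refine ⟨C, r, hC, hr0, hr1, fun n => ?_⟩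
  have h1 : ‖wc n‖ = |wd n| := by simp [hwc]
  rw [← h1, hdiff]
  exact hb n

/-- The summable geometric family over `ℤ`. -/
lemma summable_geom_int {r : ℝ} (hr0 : 0 < r) (hr1 : r < 1) :
    Summable (fun m : ℤ => r ^ m.natAbs) := by
  refine Summable.of_nat_of_neg ?_ ?_
  · simpa using summable_geometric_of_lt_one hr0.le hr1
  · simpa using summable_geometric_of_lt_one hr0.le hr1

/-- The canonical projection as an `AddMonoidHom`. -/
def psi : ℝ →+ Torus := QuotientAddGroup.mk' _

lemma psi_apply (a : ℝ) : psi a = (a : Torus) := rfl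

lemma fsT_rhoT (f : Polynomial ℤ) (y : ℤ → ℝ) (n : ℤ) :
    fsT f (rhoT y) n = ((fsR f y n : ℝ) : Torus) := by
  rw [fsT, fsR, ← psi_apply, map_sum]
  refine Finset.sum_congr rfl fun k _ => ?_
  rw [rhoT, ← psi_apply, ← map_zsmul psi]
  congr 1
  rw [zsmul_eq_mul]

lemma torus_int_cast (k : ℤ) : ((k : ℝ) : Torus) = 0 := by
  rw [AddCircle.coe_eq_zero_iff]
  exact ⟨k, by simp⟩

end

noncomputable section
open Filter Topology Polynomial

/-- Part A: summability, exact convolution identity, and boundedness of `ξ̄(v)`. -/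
lemma partA (f : Polynomial ℤ) (wd : ℤ → ℝ) (hwd : IsWdelta f wd)
    {C r : ℝ} (hC : 0 ≤ C) (hr0 : 0 < r) (hr1 : r < 1)
    (hdec : ∀ n : ℤ, |wd n| ≤ C * r ^ n.natAbs)
    (v : ℤ → ℤ) (N : ℝ) (hN0 : 0 ≤ N) (hN : ∀ n, |(v n : ℝ)| ≤ N) :
    (∀ k : ℤ, Summable fun n : ℤ => |(v n : ℝ) * wd (k - n)|) ∧
    (∀ n : ℤ, fsR f (xiBar wd v) n = (v n : ℝ)) ∧
    Bdd (xiBar wd v) := by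
  have hgeom : ∀ k : ℤ, Summable (fun n : ℤ => r ^ (k - n).natAbs) := by
    intro k
    have base := summable_geom_int hr0 hr1
    have := (Equiv.subLeft k).summable_iff (f := fun m : ℤ => r ^ m.natAbs) |>.mpr base
    simpa [Function.comp_def, Equiv.subLeft] using this
  have hbound : ∀ k n : ℤ, |(v n : ℝ) * wd (k - n)| ≤ (N * C) * r ^ (k - n).natAbs := by
    intro k n
    rw [abs_mul]
    calc |(v n : ℝ)| * |wd (k - n)| ≤ N * (C * r ^ (k-n).natAbs) :=
          mul_le_mul (hN n) (hdec _) (abs_nonneg _) hN0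
      _ = (N * C) * r ^ (k - n).natAbs := by ring
  have hsummable : ∀ k : ℤ, Summable fun n : ℤ => |(v n : ℝ) * wd (k - n)| := by
    intro k
    exact Summable.of_nonneg_of_le (fun n => abs_nonneg _) (hbound k) ((hgeom k).mul_left (N*C))
  have hsum : ∀ k : ℤ, Summable fun n : ℤ => (v n : ℝ) * wd (k - n) := by
    intro k
    exact summable_abs_iff.mp (hsummable k)
  refine ⟨hsummable, ?_, ?_⟩
  · intro n
    rw [fsR]
    have step1 : ∀ k ∈ Finset.range (f.natDegree + 1),
        (f.coeff k : ℝ) * xiBar wd v (n + k)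
          = ∑' j : ℤ, (f.coeff k : ℝ) * ((v j : ℝ) * wd (n + k - j)) := by
      intro k _
      rw [xiBar, ← tsum_mul_left]
    rw [Finset.sum_congr rfl step1]
    rw [← Summable.tsum_finsetSum (f := fun (k : ℕ) (j : ℤ) => (f.coeff k : ℝ) * ((v j : ℝ) * wd (n + k - j)))
      (fun k _ => (hsum (n + k)).mul_left _)]
    have step2 : ∀ j : ℤ, (∑ k ∈ Finset.range (f.natDegree + 1),
        (f.coeff k : ℝ) * ((v j : ℝ) * wd (n + k - j)))
          = (v j : ℝ) * vDelta (n - j) := by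
      intro j
      have : ∀ k ∈ Finset.range (f.natDegree + 1),
          (f.coeff k : ℝ) * ((v j : ℝ) * wd (n + k - j))
            = (v j : ℝ) * ((f.coeff k : ℝ) * wd ((n - j) + k)) := by
        intro k _
        have : (n : ℤ) + k - j = (n - j) + k := by ring
        rw [this]; ring
      rw [Finset.sum_congr rfl this, ← Finset.mul_sum]
      congr 1
      have := congrFun hwd.2.1 (n - j)
      rw [fsR] at this
      exact this
    rw [tsum_congr step2]
    rw [tsum_eq_single n (fun j hj => ?_)]
    · simp [vDelta]
    · have : n - j ≠ 0 := sub_ne_zero.mpr (Ne.symm hj)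
      simp [vDelta, this]
  · set T := ∑' m : ℤ, r ^ m.natAbs with hT
    have hT0 : 0 ≤ T := tsum_nonneg fun m => by positivity
    refine ⟨N * C * T, fun k => ?_⟩
    rw [xiBar]
    calc |∑' j : ℤ, (v j : ℝ) * wd (k - j)| ≤ ∑' j : ℤ, |(v j : ℝ) * wd (k - j)| := by
          have h := norm_tsum_le_tsum_norm (hsum k).norm
          simp only [Real.norm_eq_abs] at h
          exact h
      _ ≤ ∑' j : ℤ, (N * C) * r ^ (k - j).natAbs :=
          Summable.tsum_le_tsum (hbound k) (hsummable k) ((hgeom k).mul_left _)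
      _ = (N * C) * ∑' j : ℤ, r ^ (k - j).natAbs := tsum_mul_left
      _ = N * C * T := by
          congr 1
          rw [hT]
          have := (Equiv.subLeft k).tsum_eq (f := fun m : ℤ => r ^ m.natAbs)
          simpa [Equiv.subLeft] using this

end

noncomputable section
open Filter Topology Polynomial

/-- with `V = {v ∈ ℓ^∞(ℤ,ℤ) : ‖v‖_∞ ≤ ‖f‖₁}`, one has `ξ(V) = X_f`:
every point of `X_f` equals `∑_n v_n α_f^{-n}(x^Δ)` for some `v` with `|v_n| ≤ ‖f‖₁`. -/
theorem xi_of_ball_eq_Xf (f : Polynomial ℤ) (hm : 1 ≤ f.natDegree)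
    (hlead : 0 < f.leadingCoeff) (h0 : f.coeff 0 ≠ 0)
    (hirr : Irreducible (Polynomial.toLaurent f)) (hnc : Noncyclotomic f)
    (hhyp : ∀ θ : ℂ, Polynomial.aeval θ f = 0 → ‖θ‖ ≠ 1)
    (wd : ℤ → ℝ) (hwd : IsWdelta f wd) :
    (∀ v : ℤ → ℤ, (∀ n, |v n| ≤ norm1 f) →
      (∀ k : ℤ, Summable fun n : ℤ => |(v n : ℝ) * wd (k - n)|) ∧
      rhoT (xiBar wd v) ∈ Xf f) ∧
    (∀ x ∈ Xf f, ∃ v : ℤ → ℤ, (∀ n, |v n| ≤ norm1 f) ∧ rhoT (xiBar wd v) = x) := by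
  obtain ⟨C, r, hC, hr0, hr1, hdec⟩ := wd_dec f hlead hhyp wd hwd
  have hN0 : (0:ℝ) ≤ (norm1 f : ℝ) := by
    rw [norm1]
    push_cast
    exact Finset.sum_nonneg fun k _ => abs_nonneg _
  constructor
  · intro v hv
    have hN : ∀ n, |(v n : ℝ)| ≤ (norm1 f : ℝ) := by
      intro n
      rw [← Int.cast_abs]
      exact_mod_cast hv n
    obtain ⟨hsummable, hfs, _⟩ := partA f wd hwd hC hr0 hr1 hdec v _ hN0 hN
    refine ⟨hsummable, fun n => ?_⟩
    rw [fsT_rhoT, hfs n]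
    exact torus_int_cast (v n)
  · intro x hx
    have hlift : ∀ n : ℤ, ∃ z : ℝ, (z : Torus) = x n := fun n =>
      QuotientAddGroup.mk_surjective (x n)
    set w : ℤ → ℝ := fun n => Int.fract (hlift n).choose with hwdef
    have hw01 : ∀ n, 0 ≤ w n ∧ w n < 1 := fun n => ⟨Int.fract_nonneg _, Int.fract_lt_one _⟩
    have key : ∀ z : ℝ, ((Int.fract z : ℝ) : Torus) = (z : Torus) := by
      intro z
      rw [Int.fract, ← psi_apply, ← psi_apply, map_sub, psi_apply, psi_apply,
        torus_int_cast, sub_zero]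
    have hwcoe : ∀ n, ((w n : ℝ) : Torus) = x n := by
      intro n
      rw [hwdef]
      have hz := (hlift n).choose_spec
      show ((Int.fract ((hlift n).choose) : ℝ) : Torus) = x n
      rw [key]
      exact hz
    have hrho : rhoT w = x := funext hwcoe
    have hgz : ∀ n, ∃ k : ℤ, (k : ℝ) = fsR f w n := by
      intro n
      have h1 : ((fsR f w n : ℝ) : Torus) = 0 := by
        rw [← fsT_rhoT, hrho]
        exact hx n
      rw [AddCircle.coe_eq_zero_iff] at h1
      obtain ⟨k, hk⟩ := h1
      exact ⟨k, by simpa using hk⟩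
    choose vv hvv using hgz
    have hN : ∀ n, |(vv n : ℝ)| ≤ (norm1 f : ℝ) := by
      intro n
      rw [hvv n, fsR]
      calc |∑ k ∈ Finset.range (f.natDegree + 1), (f.coeff k : ℝ) * w (n + k)|
          ≤ ∑ k ∈ Finset.range (f.natDegree + 1), |(f.coeff k : ℝ) * w (n + k)| :=
            Finset.abs_sum_le_sum_abs _ _
        _ ≤ ∑ k ∈ Finset.range (f.natDegree + 1), |(f.coeff k : ℝ)| := by
            refine Finset.sum_le_sum fun k _ => ?_
            rw [abs_mul]
            have hw1 : |w (n + k)| ≤ 1 := by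
              rw [abs_of_nonneg (hw01 _).1]
              exact (hw01 _).2.le
            calc |(f.coeff k : ℝ)| * |w (n + k)| ≤ |(f.coeff k : ℝ)| * 1 :=
                  mul_le_mul_of_nonneg_left hw1 (abs_nonneg _)
              _ = |(f.coeff k : ℝ)| := mul_one _
        _ = (norm1 f : ℝ) := by
            rw [norm1]
            push_cast
            rfl
    have hvb : ∀ n, |vv n| ≤ norm1 f := by
      intro n
      have := hN n
      rw [← Int.cast_abs] at this
      exact_mod_cast this
    obtain ⟨hsummable, hfs, hbdd⟩ := partA f wd hwd hC hr0 hr1 hdec vv _ hN0 hN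
    refine ⟨vv, hvb, ?_⟩
    have hdiff : (fun n => xiBar wd vv n - w n) = 0 := by
      apply fsR_inj f hlead hhyp
      · obtain ⟨B1, hB1⟩ := hbdd
        refine ⟨B1 + 1, fun n => ?_⟩
        calc |xiBar wd vv n - w n| ≤ |xiBar wd vv n| + |w n| := abs_sub _ _
          _ ≤ B1 + 1 := add_le_add (hB1 n) (by
              rw [abs_of_nonneg (hw01 _).1]
              exact (hw01 _).2.le)
      · intro n
        have hsplit : fsR f (fun m => xiBar wd vv m - w m) n
            = fsR f (xiBar wd vv) n - fsR f w n := by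
          rw [fsR, fsR, fsR, ← Finset.sum_sub_distrib]
          exact Finset.sum_congr rfl fun k _ => by ring
        rw [hsplit, hfs n, ← hvv n, sub_self]
    funext n
    show ((xiBar wd vv n : ℝ) : Torus) = x n
    have h4 : xiBar wd vv n = w n := by
      have := congrFun hdiff n
      simpa [sub_eq_zero] using this
    rw [h4]
    exact hwcoe n

end
end

section
/- Suppose f is irreducible in ℤ[u^{±1}], noncyclotomic, and nonhyperbolic. Let T be a homeomorphism of a compact metrizable space Y whose homoclinic equivalence relation is topologically transitive, i.e. there exists y ∈ Y whose homoclinic class Δ_T(y) is dense in Y. Then every continuous map φ : Y → X_f satisfying φ ∘ T = α_f ∘ φ has image a single point x̄ ∈ X_f with α_f(x̄) = x̄. -/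
open Filter Topology Polynomial

noncomputable section

/-- The shift `σ` on `𝕋^ℤ`. -/
def shiftT (x : ℤ → Torus) : ℤ → Torus := fun n => x (n + 1)

/-- Two points of a metric space are homoclinic under a bijection `T` if
`δ(T^n y, T^n y') → 0` as `|n| → ∞`. -/
def HomoclinicPair {Y : Type*} [MetricSpace Y] (T : Equiv.Perm Y) (y y' : Y) : Prop :=
  Tendsto (fun n : ℤ => dist ((T ^ n) y) ((T ^ n) y')) cofinite (nhds 0)

/-! ### Auxiliary material -/

instance : Fact ((0:ℝ) < 1) := ⟨one_pos⟩

/-- the shift as a linear endomorphism of `ℤ → ℂ` -/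
def Sh : Module.End ℂ (ℤ → ℂ) where
  toFun v := fun n => v (n + 1)
  map_add' _ _ := rfl
  map_smul' _ _ := rfl

lemma Sh_pow (k : ℕ) (v : ℤ → ℂ) (n : ℤ) : (Sh ^ k) v n = v (n + k) := by
  induction k generalizing v n with
  | zero => simp
  | succ k ih =>
    rw [pow_succ, Module.End.mul_apply]
    show (Sh ^ k) (Sh v) n = _
    rw [ih]
    show v (n + k + 1) = _
    congr 1
    push_cast
    ring

lemma aeval_Sh_apply (p : ℂ[X]) (v : ℤ → ℂ) (n : ℤ) :
    (Polynomial.aeval Sh p) v n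
      = ∑ k ∈ Finset.range (p.natDegree + 1), p.coeff k * v (n + k) := by
  rw [Polynomial.aeval_eq_sum_range]
  have : ((∑ i ∈ Finset.range (p.natDegree + 1), p.coeff i • Sh ^ i) v) n
      = ∑ i ∈ Finset.range (p.natDegree + 1), p.coeff i • ((Sh ^ i) v n) := by
    rw [LinearMap.sum_apply]
    simp [Finset.sum_apply]
  rw [this]
  exact Finset.sum_congr rfl fun k _ => by rw [Sh_pow, smul_eq_mul]

lemma tendsto_shift (k : ℤ) : Tendsto (fun n : ℤ => n + k) cofinite cofinite :=
  (add_left_injective k).tendsto_cofinite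

lemma decay_apply (p : ℂ[X]) (v : ℤ → ℂ) (hv : Tendsto v cofinite (nhds 0)) :
    Tendsto ((Polynomial.aeval Sh p) v) cofinite (nhds 0) := by
  have : ∀ n, (Polynomial.aeval Sh p) v n
      = ∑ k ∈ Finset.range (p.natDegree + 1), p.coeff k * v (n + k) := aeval_Sh_apply p v
  rw [show ((Polynomial.aeval Sh p) v) = fun n => ∑ k ∈ Finset.range (p.natDegree + 1),
    p.coeff k * v (n + k) from funext this]
  have h0 : (0 : ℂ) = ∑ k ∈ Finset.range (p.natDegree + 1), p.coeff k * 0 := by simp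
  rw [h0]
  exact tendsto_finset_sum _ fun k _ =>
    (hv.comp (tendsto_shift (k : ℤ))).const_mul _

/-- A two-sided sequence which solves the recurrence given by a nonzero polynomial
and decays at both ends vanishes. -/
lemma homog_aux (d : ℕ) : ∀ p : ℂ[X], p ≠ 0 → p.natDegree = d → ∀ v : ℤ → ℂ,
    Tendsto v cofinite (nhds 0) → (Polynomial.aeval Sh p) v = 0 → v = 0 := by
  induction d using Nat.strong_induction_on with
  | _ d ih =>
  intro p hp hd v hv hker
  rcases Nat.eq_zero_or_pos d with h0 | hpos
  · subst h0
    have hc : p = Polynomial.C (p.coeff 0) := Polynomial.eq_C_of_natDegree_eq_zero hd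
    have hc0 : p.coeff 0 ≠ 0 := fun h => hp (by rw [hc, h, map_zero])
    funext n
    have h1 := congrFun hker n
    rw [hc] at h1
    simp only [Polynomial.aeval_C, Module.algebraMap_end_apply, Pi.smul_apply,
      Pi.zero_apply, smul_eq_mul] at h1
    exact (mul_eq_zero.mp h1).resolve_left hc0
  · have hdeg : p.degree ≠ 0 := by
      rw [Polynomial.degree_eq_natDegree hp, hd]; exact_mod_cast hpos.ne'
    obtain ⟨lam, hlam⟩ := Complex.exists_root (f := p) (by
      rw [Polynomial.degree_eq_natDegree hp, hd]; exact_mod_cast hpos)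
    obtain ⟨q, hq⟩ := (Polynomial.dvd_iff_isRoot.mpr hlam)
    have hq0 : q ≠ 0 := fun h => hp (by rw [hq, h, mul_zero])
    have hXl : (Polynomial.X - Polynomial.C lam) ≠ (0 : ℂ[X]) := Polynomial.X_sub_C_ne_zero lam
    have hdq : q.natDegree = d - 1 := by
      have := Polynomial.natDegree_mul hXl hq0
      rw [← hq, hd, Polynomial.natDegree_X_sub_C] at this
      omega
    set u := (Polynomial.aeval Sh q) v with hu
    have hu_decay : Tendsto u cofinite (nhds 0) := decay_apply q v hv
    have hrec : ∀ n : ℤ, u (n + 1) = lam * u n := by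
      intro n
      have h2 : (Polynomial.aeval Sh p) v = (Polynomial.aeval Sh (Polynomial.X - Polynomial.C lam))
          ((Polynomial.aeval Sh q) v) := by
        rw [hq, map_mul, Module.End.mul_apply]
      have h3 := congrFun (h2 ▸ hker) n
      simp only [map_sub, Polynomial.aeval_X, Polynomial.aeval_C, LinearMap.sub_apply,
        Module.algebraMap_end_apply, Pi.sub_apply, Pi.smul_apply, Pi.zero_apply,
        smul_eq_mul] at h3
      have h4 : Sh u n = u (n + 1) := rfl
      rw [← hu, h4] at h3
      exact sub_eq_zero.mp h3
    -- u n = lam ^ n * u 0, hence u = 0 by decay at both ends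
    have hu0 : u = 0 := by
      by_cases hl0 : lam = 0
      · funext n
        have h1 := hrec (n - 1)
        rw [hl0, zero_mul, sub_add_cancel] at h1
        exact h1
      · have hgen : ∀ n : ℤ, u n = lam ^ n * u 0 := by
          intro n
          induction n using Int.induction_on with
          | zero => simp
          | succ k ihk =>
            rw [hrec k, ihk, zpow_add_one₀ hl0]
            ring
          | pred k ihk =>
            have h1 := hrec (-(k:ℤ) - 1)
            rw [sub_add_cancel, ihk] at h1
            have h2 : u (-(k:ℤ) - 1) = lam⁻¹ * (lam ^ (-(k:ℤ)) * u 0) := by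
              rw [h1, ← mul_assoc, inv_mul_cancel₀ hl0, one_mul]
            rw [h2, zpow_sub_one₀ hl0]
            ring
        by_contra hne
        have hu00 : u 0 ≠ 0 := fun h => hne (funext fun n => by simp [hgen n, h])
        have hpos0 : (0:ℝ) < ‖u 0‖ := norm_pos_iff.mpr hu00
        rcases le_or_gt 1 ‖lam‖ with habs | habs
        · have hcoe : Tendsto (fun k : ℕ => (k:ℤ)) atTop cofinite := by
            rw [Int.cofinite_eq]
            have ha : Tendsto (fun k : ℕ => (k:ℤ)) atTop atTop := tendsto_natCast_atTop_atTop
            exact ha.mono_right le_sup_right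
          have hat : Tendsto (fun k : ℕ => ‖u (k:ℤ)‖) atTop (nhds 0) := by
            have := (hu_decay.comp hcoe).norm
            rwa [norm_zero] at this
          obtain ⟨k, hk⟩ := (hat.eventually (eventually_lt_nhds hpos0)).exists
          apply absurd hk
          push_neg
          calc ‖u 0‖ = 1 * ‖u 0‖ := (one_mul _).symm
          _ ≤ ‖lam‖ ^ k * ‖u 0‖ :=
            mul_le_mul_of_nonneg_right (one_le_pow₀ habs) (norm_nonneg _)
          _ = ‖u (k:ℤ)‖ := by
            rw [hgen (k:ℤ), norm_mul, zpow_natCast, norm_pow]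
        · have hcoe : Tendsto (fun k : ℕ => -(k:ℤ)) atTop cofinite := by
            rw [Int.cofinite_eq]
            have ha : Tendsto (fun k : ℕ => (k:ℤ)) atTop atTop := tendsto_natCast_atTop_atTop
            have hb : Tendsto (fun n : ℤ => -n) atTop atBot := tendsto_neg_atTop_atBot
            exact (hb.comp ha).mono_right le_sup_left
          have hat : Tendsto (fun k : ℕ => ‖u (-(k:ℤ))‖) atTop (nhds 0) := by
            have := (hu_decay.comp hcoe).norm
            rwa [norm_zero] at this
          obtain ⟨k, hk⟩ := (hat.eventually (eventually_lt_nhds hpos0)).exists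
          apply absurd hk
          push_neg
          have hlpos : (0:ℝ) < ‖lam‖ := norm_pos_iff.mpr hl0
          have h1 : ‖lam‖ ^ k ≤ 1 := pow_le_one₀ (norm_nonneg _) habs.le
          have h2 : (0:ℝ) < ‖lam‖ ^ k := pow_pos hlpos k
          have h3 : 1 ≤ (‖lam‖ ^ k)⁻¹ := (one_le_inv₀ h2).mpr h1
          calc ‖u 0‖ = 1 * ‖u 0‖ := (one_mul _).symm
          _ ≤ (‖lam‖ ^ k)⁻¹ * ‖u 0‖ := mul_le_mul_of_nonneg_right h3 (norm_nonneg _)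
          _ = ‖u (-(k:ℤ))‖ := by
            rw [hgen (-(k:ℤ)), norm_mul, zpow_neg, norm_inv, zpow_natCast, norm_pow]
    exact ih (d-1) (by omega) q hq0 hdq v hv hu0

/-! ### Laurent polynomial units and irreducibility transfer -/

lemma unit_toLaurent {a : ℤ[X]} (h : IsUnit (Polynomial.toLaurent a)) :
    ∃ (r : ℤ) (j : ℕ), IsUnit r ∧ a = Polynomial.C r * Polynomial.X ^ j := by
  obtain ⟨v, hv⟩ := h.exists_right_inv
  obtain ⟨n, b, hb⟩ := LaurentPolynomial.exists_T_pow v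
  have hab : Polynomial.toLaurent (a * b) = Polynomial.toLaurent (Polynomial.X ^ n) := by
    rw [map_mul, hb, ← mul_assoc, hv, one_mul, Polynomial.toLaurent_X_pow]
  have hXn : a * b = Polynomial.X ^ n := Polynomial.toLaurent_injective hab
  have hdvd : a ∣ Polynomial.X ^ n := ⟨b, hXn.symm⟩
  obtain ⟨i, _, hassoc⟩ := (dvd_prime_pow Polynomial.prime_X n).mp hdvd
  obtain ⟨u, hu⟩ := hassoc
  obtain ⟨r, hr, hCr⟩ := Polynomial.isUnit_iff.mp u.isUnit
  have hrr : r * r = 1 := Int.isUnit_mul_self hr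
  refine ⟨r, i, hr, ?_⟩
  have hXi : a * Polynomial.C r = Polynomial.X ^ i := by rw [hCr, hu]
  calc a = a * (Polynomial.C r * Polynomial.C r) := by
        rw [← map_mul, hrr, map_one, mul_one]
  _ = Polynomial.X ^ i * Polynomial.C r := by rw [← mul_assoc, hXi]
  _ = Polynomial.C r * Polynomial.X ^ i := mul_comm _ _

lemma f_irred_int {f : ℤ[X]} (hm : 1 ≤ f.natDegree) (h0 : f.coeff 0 ≠ 0)
    (hirr : Irreducible (Polynomial.toLaurent f)) : Irreducible f := by
  constructor
  · intro hu
    have := Polynomial.natDegree_eq_zero_of_isUnit hu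
    omega
  · intro a b hab
    have h2 := hirr.isUnit_or_isUnit (by rw [hab, map_mul])
    have key : ∀ c d : ℤ[X], f = c * d → IsUnit (Polynomial.toLaurent c) → IsUnit c := by
      intro c d hcd hc
      obtain ⟨r, j, hr, rfl⟩ := unit_toLaurent hc
      have hj : j = 0 := by
        by_contra hj0
        apply h0
        rw [hcd, Polynomial.mul_coeff_zero, Polynomial.coeff_C_mul, Polynomial.coeff_X_pow]
        simp [eq_comm, hj0]
      subst hj
      rw [pow_zero, mul_one]
      exact (Polynomial.isUnit_C).mpr hr
    rcases h2 with h | h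
    · exact Or.inl (key a b hab h)
    · exact Or.inr (key b a (by rw [hab, mul_comm]) h)

lemma f_primitive {f : ℤ[X]} (hm : 1 ≤ f.natDegree) (h0 : f.coeff 0 ≠ 0)
    (hirr : Irreducible (Polynomial.toLaurent f)) : f.IsPrimitive := by
  intro r hr
  obtain ⟨g, hg⟩ := hr
  have h2 := hirr.isUnit_or_isUnit (by rw [hg, map_mul])
  rcases h2 with h | h
  · obtain ⟨r', j, hr', hCr⟩ := unit_toLaurent (a := Polynomial.C r)
      (by rwa [Polynomial.toLaurent_C] at h ⊢)
    by_cases hj : j = 0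
    · subst hj
      rw [pow_zero, mul_one] at hCr
      rwa [Polynomial.C_inj.mp hCr]
    · exfalso
      have : (Polynomial.C r).coeff j = (Polynomial.C r' * Polynomial.X ^ j).coeff j := by rw [hCr]
      rw [Polynomial.coeff_C, Polynomial.coeff_C_mul, Polynomial.coeff_X_pow] at this
      simp [hj] at this
      exact hr'.ne_zero this.symm
  · obtain ⟨r', j, hr', rfl⟩ := unit_toLaurent h
    by_cases hj : j = 0
    · subst hj
      rw [pow_zero, mul_one, ← map_mul] at hg
      have := hm
      rw [hg, Polynomial.natDegree_C] at this
      omega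
    · exfalso
      apply h0
      rw [hg, ← mul_assoc, ← map_mul, Polynomial.mul_coeff_zero, Polynomial.coeff_X_pow]
      simp [eq_comm, hj]

/-! ### Lifting from the circle -/

lemma equivIoc_coe (x : ℝ) (hx : x ∈ Set.Ioc (-(1/2):ℝ) ((-(1/2))+1)) :
    AddCircle.equivIoc 1 (-(1/2)) (x : Torus) = ⟨x, hx⟩ := by
  rw [← show (AddCircle.equivIoc 1 (-(1/2))).symm ⟨x, hx⟩ = (x : Torus) from rfl,
    Equiv.apply_symm_apply]

lemma equivIoc_zero : ((AddCircle.equivIoc 1 (-(1/2)) (0 : Torus) : ℝ)) = 0 := by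
  have h0 : (0:ℝ) ∈ Set.Ioc (-(1/2) : ℝ) ((-(1/2)) + 1) := by constructor <;> norm_num
  have h00 : ((0:ℝ):Torus) = 0 := by norm_cast
  rw [← h00, equivIoc_coe 0 h0]

lemma half_ne_zero_torus : ((-(1/2) : ℝ) : Torus) ≠ 0 := by
  rw [Ne, AddCircle.coe_eq_zero_iff]
  rintro ⟨n, hn⟩
  rw [zsmul_eq_mul, mul_one] at hn
  have h2 : (2 * n : ℤ) = (-1 : ℤ) := by
    exact_mod_cast (by linarith : (2:ℝ) * (n:ℤ) = -1)
  omega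

/-- Key rigidity lemma: in the nonhyperbolic irreducible case, a point of `X_f`
whose orbit-coordinates tend to `0` (at both ends) is `0` itself. -/
lemma key_triviality (f : Polynomial ℤ) (hm : 1 ≤ f.natDegree) (h0 : f.coeff 0 ≠ 0)
    (hirr : Irreducible (Polynomial.toLaurent f))
    (hnonhyp : ∃ θ : ℂ, Polynomial.aeval θ f = 0 ∧ ‖θ‖ = 1)
    (w : ℤ → Torus) (hw : ∀ n, fsT f w n = 0)
    (hdec : Tendsto w cofinite (nhds (0 : Torus))) : ∀ n, w n = 0 := by
  obtain ⟨θ, hθ, hθabs⟩ := hnonhyp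
  set m := f.natDegree with hmdef
  -- the lift of w to real numbers in (-1/2, 1/2]
  set wt : ℤ → ℝ := fun n => ((AddCircle.equivIoc 1 (-(1/2)) (w n) : ℝ)) with hwt
  have hwt_coe : ∀ n, ((wt n : ℝ) : Torus) = w n := fun n =>
    (AddCircle.equivIoc 1 (-(1/2))).symm_apply_apply (w n)
  have hwt_mem : ∀ n, wt n ∈ Set.Ioc (-(1/2):ℝ) ((-(1/2))+1) := fun n =>
    (AddCircle.equivIoc 1 (-(1/2)) (w n)).2
  have hwt_dec : Tendsto wt cofinite (nhds 0) := by
    have hcont : ContinuousAt (AddCircle.equivIoc (1:ℝ) (-(1/2))) (0 : Torus) :=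
      AddCircle.continuousAt_equivIoc (1:ℝ) (-(1/2)) (Ne.symm half_ne_zero_torus)
    have h1 := hcont.tendsto.comp hdec
    have h2 : Tendsto wt cofinite (nhds ((AddCircle.equivIoc 1 (-(1/2)) (0:Torus) : ℝ))) :=
      ((continuous_subtype_val.tendsto _).comp h1)
    rwa [equivIoc_zero] at h2
  -- the integer sequence c = f(σ) applied to the lift
  set c : ℤ → ℝ := fun n => ∑ k ∈ Finset.range (m + 1), (f.coeff k : ℝ) * wt (n + k) with hc
  have hc_int : ∀ n, ∃ z : ℤ, (z : ℝ) = c n := by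
    intro n
    have hcoe : ((c n : ℝ) : Torus) = 0 := by
      have : ((c n : ℝ) : Torus)
          = ∑ k ∈ Finset.range (m + 1), f.coeff k • ((wt (n + k) : ℝ) : Torus) := by
        rw [hc]
        push_cast [QuotientAddGroup.mk_sum]
        exact Finset.sum_congr rfl fun k _ => by
          rw [← zsmul_eq_mul]
          rfl
      rw [this]
      have := hw n
      rw [fsT] at this
      rw [← this]
      exact Finset.sum_congr rfl fun k _ => by rw [hwt_coe]
    obtain ⟨z, hz⟩ := (AddCircle.coe_eq_zero_iff (1:ℝ)).mp hcoe
    exact ⟨z, by rw [← hz, zsmul_eq_mul, mul_one]⟩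
  have hc_dec : Tendsto c cofinite (nhds 0) := by
    rw [hc]
    have h0' : (0 : ℝ) = ∑ k ∈ Finset.range (m + 1), (f.coeff k : ℝ) * 0 := by simp
    rw [h0']
    exact tendsto_finset_sum _ fun k _ =>
      (hwt_dec.comp (tendsto_shift (k : ℤ))).const_mul _
  have hc_fin : {n : ℤ | c n ≠ 0}.Finite := by
    have h1 : ∀ᶠ n in cofinite, c n < 1 := hc_dec.eventually (eventually_lt_nhds one_pos)
    have h2 : ∀ᶠ n in cofinite, -1 < c n := hc_dec.eventually (eventually_gt_nhds (by norm_num))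
    have h3 : ∀ᶠ n in cofinite, c n = 0 := by
      filter_upwards [h1, h2] with n hn1 hn2
      obtain ⟨z, hz⟩ := hc_int n
      rw [← hz] at hn1 hn2 ⊢
      have hza : -1 < z := by exact_mod_cast hn2
      have hzb : z < 1 := by exact_mod_cast hn1
      have hzz : z = 0 := by omega
      rw [hzz]
      norm_num
    exact Filter.eventually_cofinite.mp h3
  -- bound on support of c
  obtain ⟨N₀, hN₀⟩ : ∃ N₀ : ℕ, ∀ n : ℤ, N₀ < n.natAbs → c n = 0 := by
    refine ⟨hc_fin.toFinset.sup (fun n => n.natAbs), fun n hn => ?_⟩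
    by_contra hcn
    have hmem : n ∈ hc_fin.toFinset := hc_fin.mem_toFinset.mpr hcn
    have hle : n.natAbs ≤ hc_fin.toFinset.sup (fun n => n.natAbs) :=
      Finset.le_sup (f := fun n : ℤ => n.natAbs) hmem
    omega
  -- the canonical integer values of c
  set Cz : ℤ → ℤ := fun n => Classical.choose (hc_int n) with hCzdef
  have hCz : ∀ n, ((Cz n : ℤ) : ℝ) = c n := fun n => Classical.choose_spec (hc_int n)
  -- the conjugate root μ = conj θ, with μ⁻¹ = θ
  set μ : ℂ := (starRingEnd ℂ) θ with hμdef
  have hμabs : ‖μ‖ = 1 := by rw [hμdef, Complex.norm_conj]; exact hθabs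
  have hμ0 : μ ≠ 0 := by
    intro h; rw [h] at hμabs; simp at hμabs
  have hμθ : μ * θ = 1 := by
    rw [hμdef, mul_comm, Complex.mul_conj, Complex.normSq_eq_norm_sq, hθabs]
    norm_num
  have hμinv : μ⁻¹ = θ := inv_eq_of_mul_eq_one_right hμθ
  have hroot : ∑ k ∈ Finset.range (m + 1), (f.coeff k : ℂ) * (μ⁻¹) ^ k = 0 := by
    rw [hμinv]
    rw [Polynomial.aeval_eq_sum_range] at hθ
    rw [← hθ]
    exact Finset.sum_congr rfl fun k _ => by rw [zsmul_eq_mul]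
  -- the weighted sequence h and the key limit computation
  set h : ℤ → ℂ := fun j => μ ^ j * (wt j : ℂ) with hhdef
  have hstep : ∀ a b : ℤ, a ≤ b →
      ∑ j ∈ Finset.Icc (a+1) (b+1), h j = ∑ j ∈ Finset.Icc a b, h j + h (b+1) - h a := by
    intro a b hab
    have e1 : Finset.Icc a (b+1) = insert a (Finset.Icc (a+1) (b+1)) := by
      ext x
      simp only [Finset.mem_Icc, Finset.mem_insert]
      omega
    have e2 : Finset.Icc a (b+1) = insert (b+1) (Finset.Icc a b) := by
      ext x
      simp only [Finset.mem_Icc, Finset.mem_insert]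
      omega
    have m1 : a ∉ Finset.Icc (a+1) (b+1) := by simp
    have m2 : (b+1) ∉ Finset.Icc a b := by simp
    have s1 : ∑ j ∈ Finset.Icc a (b+1), h j = h a + ∑ j ∈ Finset.Icc (a+1) (b+1), h j := by
      rw [e1, Finset.sum_insert m1]
    have s2 : ∑ j ∈ Finset.Icc a (b+1), h j = h (b+1) + ∑ j ∈ Finset.Icc a b, h j := by
      rw [e2, Finset.sum_insert m2]
    linear_combination s2 - s1
  have hshift : ∀ N : ℕ, ∀ k : ℕ,
      ∑ j ∈ Finset.Icc (-(N:ℤ) + k) ((N:ℤ) + k), h j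
        = ∑ j ∈ Finset.Icc (-(N:ℤ)) (N:ℤ), h j
          + ∑ i ∈ Finset.range k, (h ((N:ℤ)+1+i) - h (-(N:ℤ)+i)) := by
    intro N k
    induction k with
    | zero => simp
    | succ k ih =>
      have e1 : (-(N:ℤ) + (k+1:ℕ)) = (-(N:ℤ) + k) + 1 := by push_cast; ring
      have e2 : ((N:ℤ) + (k+1:ℕ)) = ((N:ℤ) + k) + 1 := by push_cast; ring
      rw [e1, e2, hstep (-(N:ℤ)+k) ((N:ℤ)+k) (by omega), ih, Finset.sum_range_succ]
      have e3 : ((N:ℤ) + k) + 1 = (N:ℤ) + 1 + k := by ring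
      rw [e3]
      ring
  -- the partial sums tend to zero
  have htends : Tendsto (fun N : ℕ => ∑ n ∈ Finset.Icc (-(N:ℤ)) (N:ℤ), (c n : ℂ) * μ ^ n)
      atTop (nhds 0) := by
    have hexp : ∀ N : ℕ, ∑ n ∈ Finset.Icc (-(N:ℤ)) (N:ℤ), (c n : ℂ) * μ ^ n
        = ∑ k ∈ Finset.range (m+1), (f.coeff k : ℂ) * (μ⁻¹) ^ k
            * (∑ i ∈ Finset.range k, (h ((N:ℤ)+1+i) - h (-(N:ℤ)+i))) := by
      intro N
      have step1 : ∀ n : ℤ, (c n : ℂ) * μ ^ n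
          = ∑ k ∈ Finset.range (m+1), (f.coeff k : ℂ) * (μ⁻¹) ^ k * h (n + k) := by
        intro n
        have hcast : ((c n : ℝ) : ℂ) = ∑ k ∈ Finset.range (m+1),
            (f.coeff k : ℂ) * ((wt (n+k) : ℝ) : ℂ) := by
          rw [hc]; push_cast; ring_nf
        rw [hcast, Finset.sum_mul]
        refine Finset.sum_congr rfl fun k _ => ?_
        have hpow : (μ⁻¹) ^ k * μ ^ (n + (k:ℤ)) = μ ^ n := by
          rw [← zpow_natCast (μ⁻¹) k, inv_zpow, ← zpow_neg, ← zpow_add₀ hμ0]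
          congr 1
          ring
        rw [hhdef]
        simp only []
        rw [← hpow]
        ring
      rw [Finset.sum_congr rfl fun n _ => step1 n, Finset.sum_comm]
      have step2 : ∀ k : ℕ, k ∈ Finset.range (m+1) →
          ∑ n ∈ Finset.Icc (-(N:ℤ)) (N:ℤ), (f.coeff k : ℂ) * (μ⁻¹) ^ k * h (n + k)
            = (f.coeff k : ℂ) * (μ⁻¹) ^ k *
              (∑ j ∈ Finset.Icc (-(N:ℤ)) (N:ℤ), h j
                + ∑ i ∈ Finset.range k, (h ((N:ℤ)+1+i) - h (-(N:ℤ)+i))) := by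
        intro k _
        rw [← Finset.mul_sum]
        congr 1
        rw [← hshift N k, ← Finset.map_add_right_Icc, Finset.sum_map]
        rfl
      rw [Finset.sum_congr rfl step2]
      rw [show ∀ A : ℂ, ∀ F : ℕ → ℂ, (∑ k ∈ Finset.range (m+1), (f.coeff k : ℂ) * (μ⁻¹)^k *
        (A + F k)) = (∑ k ∈ Finset.range (m+1), (f.coeff k : ℂ) * (μ⁻¹)^k) * A
          + ∑ k ∈ Finset.range (m+1), (f.coeff k : ℂ) * (μ⁻¹)^k * F k from
        fun A F => by rw [Finset.sum_mul, ← Finset.sum_add_distrib]; exact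
          Finset.sum_congr rfl fun k _ => by ring]
      rw [hroot, zero_mul, zero_add]
    rw [funext hexp]
    have h00 : (0:ℂ) = ∑ k ∈ Finset.range (m+1), (f.coeff k : ℂ) * (μ⁻¹) ^ k * 0 := by simp
    rw [h00]
    refine tendsto_finset_sum _ fun k _ => ?_
    refine Tendsto.const_mul _ ?_
    have h000 : (0:ℂ) = ∑ i ∈ Finset.range k, ((0:ℂ) - 0) := by simp
    rw [h000]
    refine tendsto_finset_sum _ fun i _ => Tendsto.sub ?_ ?_
    · have hc1 : Tendsto (fun N : ℕ => (N:ℤ)+1+i) atTop cofinite := by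
        rw [Int.cofinite_eq]
        have ha : Tendsto (fun N : ℕ => (N:ℤ)) atTop atTop := tendsto_natCast_atTop_atTop
        exact ((ha.atTop_add tendsto_const_nhds).atTop_add tendsto_const_nhds).mono_right
          le_sup_right
      have habs0 : Tendsto (fun N : ℕ => ‖wt ((N:ℤ)+1+i)‖) atTop (nhds 0) := by
        have := (hwt_dec.comp hc1).norm
        rwa [norm_zero] at this
      refine squeeze_zero_norm (fun N => ?_) habs0
      rw [hhdef]
      simp only []
      rw [norm_mul, norm_zpow, hμabs, one_zpow, one_mul,
        Complex.norm_real]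
    · have hc1 : Tendsto (fun N : ℕ => -(N:ℤ)+i) atTop cofinite := by
        rw [Int.cofinite_eq]
        have ha : Tendsto (fun N : ℕ => (N:ℤ)) atTop atTop := tendsto_natCast_atTop_atTop
        have hb : Tendsto (fun n : ℤ => -n) atTop atBot := tendsto_neg_atTop_atBot
        exact ((hb.comp ha).atBot_add tendsto_const_nhds).mono_right le_sup_left
      have habs0 : Tendsto (fun N : ℕ => ‖wt (-(N:ℤ)+i)‖) atTop (nhds 0) := by
        have := (hwt_dec.comp hc1).norm
        rwa [norm_zero] at this
      refine squeeze_zero_norm (fun N => ?_) habs0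
      rw [hhdef]
      simp only []
      rw [norm_mul, norm_zpow, hμabs, one_zpow, one_mul,
        Complex.norm_real]
  -- conclusion of the summation trick
  have hTzero : ∑ n ∈ Finset.Icc (-(N₀:ℤ)) (N₀:ℤ), (c n : ℂ) * μ ^ n = 0 := by
    have hconst : ∀ᶠ (N : ℕ) in atTop,
        ∑ n ∈ Finset.Icc (-(N₀:ℤ)) (N₀:ℤ), (c n : ℂ) * μ ^ n
          = ∑ n ∈ Finset.Icc (-(N:ℤ)) (N:ℤ), (c n : ℂ) * μ ^ n := by
      rw [eventually_atTop]
      refine ⟨N₀, fun N hN => ?_⟩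
      have hNN : (N₀:ℤ) ≤ (N:ℤ) := by exact_mod_cast hN
      refine Finset.sum_subset (Finset.Icc_subset_Icc (neg_le_neg hNN) hNN) ?_
      intro x hx hnx
      have : c x = 0 := by
        apply hN₀
        simp only [Finset.mem_Icc] at hx hnx
        omega
      rw [this]
      norm_num
    exact tendsto_nhds_unique (tendsto_const_nhds.congr' hconst) htends
  -- Build the integer polynomial Q recording the sequence c
  have hCz0 : ∀ n, c n = 0 → Cz n = 0 := fun n hn => by
    have h1 := hCz n
    rw [hn] at h1
    exact_mod_cast h1
  set Q : ℤ[X] := ∑ j ∈ Finset.range (2*N₀+1), Polynomial.monomial j (Cz ((N₀:ℤ) - j))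
    with hQdef
  have hQcoeff : ∀ s : ℕ, Q.coeff s = Cz ((N₀:ℤ) - s) := by
    intro s
    rw [hQdef, Polynomial.finset_sum_coeff]
    simp only [Polynomial.coeff_monomial]
    rw [Finset.sum_ite_eq' (Finset.range (2*N₀+1)) s]
    by_cases hs : s ∈ Finset.range (2*N₀+1)
    · rw [if_pos hs]
    · rw [if_neg hs]
      symm
      apply hCz0
      apply hN₀
      simp only [Finset.mem_range] at hs
      omega
  have hQR : ∀ s : ℕ, ((Q.coeff s : ℤ) : ℝ) = c ((N₀:ℤ) - s) := fun s => by
    rw [hQcoeff s, hCz]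
  -- θ is a root of Q
  have hQθ : Polynomial.aeval θ Q = 0 := by
    have hev : Polynomial.aeval θ Q
        = ∑ j ∈ Finset.range (2*N₀+1), (Cz ((N₀:ℤ) - j) : ℂ) * θ^j := by
      rw [hQdef, map_sum]
      exact Finset.sum_congr rfl fun j _ => by
        rw [Polynomial.aeval_monomial]
        simp
    have hrel : μ ^ (N₀:ℤ) * Polynomial.aeval θ Q
        = ∑ n ∈ Finset.Icc (-(N₀:ℤ)) (N₀:ℤ), (c n : ℂ) * μ ^ n := by
      rw [hev, Finset.mul_sum]
      refine Finset.sum_nbij' (fun (j : ℕ) => (N₀:ℤ) - j)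
        (fun (n : ℤ) => ((N₀:ℤ) - n).toNat) ?_ ?_ ?_ ?_ ?_
      · intro j hj
        simp only [Finset.mem_range] at hj
        simp only [Finset.mem_Icc]
        omega
      · intro n hn
        simp only [Finset.mem_Icc] at hn
        simp only [Finset.mem_range]
        omega
      · intro j hj
        simp only [Finset.mem_range] at hj
        show ((N₀:ℤ) - ((N₀:ℤ) - (j:ℕ))).toNat = j
        omega
      · intro n hn
        simp only [Finset.mem_Icc] at hn
        show (N₀:ℤ) - ((((N₀:ℤ) - n).toNat : ℕ) : ℤ) = n
        omega
      · intro j hj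
        have hcz : ((c ((N₀:ℤ) - j) : ℝ) : ℂ) = ((Cz ((N₀:ℤ) - j) : ℤ) : ℂ) := by
          rw [← hCz]
          norm_cast
        rw [hcz]
        have hpow : μ ^ ((N₀:ℤ) - j) = μ ^ (N₀:ℤ) * θ ^ j := by
          rw [← hμinv, inv_pow, ← zpow_natCast μ j, ← zpow_neg, ← zpow_add₀ hμ0,
            sub_eq_add_neg]
        rw [hpow]
        ring
    have hne : μ ^ (N₀:ℤ) ≠ 0 := zpow_ne_zero _ hμ0
    exact (mul_eq_zero.mp (hrel.trans hTzero)).resolve_left hne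
  -- irreducibility and the Gauss lemma give f ∣ Q
  have hf0 : f ≠ 0 := fun hff => by
    have : f.natDegree = 0 := by rw [hff]; simp
    omega
  have hprim := f_primitive hm h0 hirr
  set F := f.map (Int.castRingHom ℚ) with hF
  have hFirr : Irreducible F :=
    (Polynomial.IsPrimitive.Int.irreducible_iff_irreducible_map_cast hprim).mp
      (f_irred_int hm h0 hirr)
  have hFθ : Polynomial.aeval θ F = 0 := by
    rw [hF, ← algebraMap_int_eq, Polynomial.aeval_map_algebraMap]
    exact hθ
  have hF0 : F ≠ 0 := by
    rw [hF]
    exact (Polynomial.map_ne_zero_iff Int.cast_injective).mpr hf0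
  have hint : IsIntegral ℚ θ := IsAlgebraic.isIntegral ⟨F, hF0, hFθ⟩
  have hminF : minpoly ℚ θ ∣ F := minpoly.dvd ℚ θ hFθ
  have hassocF : Associated (minpoly ℚ θ) F :=
    (minpoly.irreducible hint).associated_of_dvd hFirr hminF
  have hQqθ : Polynomial.aeval θ (Q.map (Int.castRingHom ℚ)) = 0 := by
    rw [← algebraMap_int_eq, Polynomial.aeval_map_algebraMap]
    exact hQθ
  have hFQq : F ∣ Q.map (Int.castRingHom ℚ) :=
    hassocF.symm.dvd.trans (minpoly.dvd ℚ θ hQqθ)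
  have hfQ : f ∣ Q := by
    by_cases hQ0 : Q = 0
    · rw [hQ0]; exact dvd_zero f
    · have hcz : (Q.content : ℚ) ≠ 0 := by
        have : Q.content ≠ 0 := fun hcq => hQ0 (Polynomial.content_eq_zero_iff.mp hcq)
        exact_mod_cast this
      have hQdec : Q.map (Int.castRingHom ℚ) = Polynomial.C ((Q.content : ℚ))
          * (Q.primPart.map (Int.castRingHom ℚ)) := by
        conv_lhs => rw [Q.eq_C_content_mul_primPart]
        rw [Polynomial.map_mul, Polynomial.map_C]
        norm_num
      have hdl : Q.primPart.map (Int.castRingHom ℚ)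
          = Q.map (Int.castRingHom ℚ) * Polynomial.C ((Q.content : ℚ))⁻¹ := by
        rw [hQdec, mul_comm, ← mul_assoc, ← Polynomial.C_mul, inv_mul_cancel₀ hcz,
          Polynomial.C_1, one_mul]
      have hFprim : F ∣ Q.primPart.map (Int.castRingHom ℚ) := by
        rw [hdl]
        exact hFQq.mul_right _
      have hfp : f ∣ Q.primPart := by
        apply hprim.dvd_of_fraction_map_dvd_fraction_map (K := ℚ)
        rw [algebraMap_int_eq]
        exact hFprim
      exact hfp.trans Q.primPart_dvd
  obtain ⟨g, hQfg⟩ := hfQ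
  -- unfold g into a two-sided finitely supported integer sequence
  set G : ℤ → ℤ := fun t => if ht : 0 ≤ t then g.coeff t.toNat else 0 with hGdef
  set gt : ℤ → ℝ := fun n => (G ((N₀:ℤ) - n) : ℝ) with hgt
  have hconv : ∀ s : ℕ,
      (∑ k ∈ Finset.range (m+1), f.coeff k * G ((s:ℤ) - k)) = Q.coeff s := by
    intro s
    have h1 : Q.coeff s = ∑ i ∈ Finset.range (s+1), f.coeff i * g.coeff (s - i) := by
      rw [hQfg, Polynomial.coeff_mul, Finset.Nat.sum_antidiagonal_eq_sum_range_succ_mk]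
    have hA : ∑ k ∈ Finset.range (m+1), f.coeff k * G ((s:ℤ) - k)
        = ∑ k ∈ Finset.range (m+s+2), f.coeff k * G ((s:ℤ) - k) := by
      apply Finset.sum_subset (Finset.range_subset_range.mpr (by omega))
      intro x hx hnx
      have hfx : f.coeff x = 0 := Polynomial.coeff_eq_zero_of_natDegree_lt (by
        simp only [Finset.mem_range] at hx hnx
        omega)
      rw [hfx, zero_mul]
    have hB : ∑ i ∈ Finset.range (s+1), f.coeff i * g.coeff (s - i)
        = ∑ k ∈ Finset.range (m+s+2), f.coeff k * G ((s:ℤ) - k) := by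
      have hterm : ∀ i ∈ Finset.range (s+1),
          f.coeff i * g.coeff (s - i) = f.coeff i * G ((s:ℤ) - i) := by
        intro i hi
        simp only [Finset.mem_range] at hi
        have h0i : (0:ℤ) ≤ (s:ℤ) - i := by omega
        rw [hGdef]
        simp only []
        rw [dif_pos h0i]
        congr 2
        omega
      rw [Finset.sum_congr rfl hterm]
      apply Finset.sum_subset (Finset.range_subset_range.mpr (by omega))
      intro x hx hnx
      have hneg : ¬ ((0:ℤ) ≤ (s:ℤ) - x) := by
        simp only [Finset.mem_range] at hx hnx
        omega
      rw [hGdef]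
      simp only []
      rw [dif_neg hneg, mul_zero]
    rw [hA, h1, hB]
  -- f(σ) applied to the sequence gt gives back c
  have hfg_seq : ∀ n : ℤ, ∑ k ∈ Finset.range (m+1), (f.coeff k : ℝ) * gt (n + k) = c n := by
    intro n
    by_cases hn : (N₀:ℤ) - n < 0
    · have hz : ∀ k : ℕ, gt (n + k) = 0 := by
        intro k
        rw [hgt]
        simp only []
        rw [hGdef]
        simp only []
        rw [dif_neg (by omega)]
        norm_num
      rw [Finset.sum_congr rfl fun k _ => by rw [hz k, mul_zero], Finset.sum_const_zero]
      symm
      apply hN₀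
      omega
    · push_neg at hn
      set s : ℕ := ((N₀:ℤ) - n).toNat with hs
      have hsn : (s:ℤ) = (N₀:ℤ) - n := Int.toNat_of_nonneg hn
      have hcast : ∑ k ∈ Finset.range (m+1), (f.coeff k : ℝ) * (G ((s:ℤ) - k) : ℝ)
          = ((Q.coeff s : ℤ) : ℝ) := by
        rw [← hconv s]
        push_cast
        ring
      have hterm : ∀ k ∈ Finset.range (m+1), (f.coeff k : ℝ) * gt (n + k)
          = (f.coeff k : ℝ) * (G ((s:ℤ) - k) : ℝ) := by
        intro k _
        rw [hgt]
        simp only []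
        rw [show (N₀:ℤ) - (n + k) = (s:ℤ) - k from by omega]
      rw [Finset.sum_congr rfl hterm, hcast, hQR]
      congr 1
      omega
  -- gt has finite support, hence decays
  have hgt_fin : {n : ℤ | gt n ≠ 0}.Finite := by
    apply Set.Finite.subset (Set.finite_Icc ((N₀:ℤ) - g.natDegree) (N₀:ℤ))
    intro n hn
    simp only [Set.mem_setOf_eq] at hn
    simp only [Set.mem_Icc]
    by_contra hcon
    apply hn
    rw [hgt]
    simp only []
    rw [hGdef]
    simp only []
    by_cases hpos : (0:ℤ) ≤ (N₀:ℤ) - n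
    · rw [dif_pos hpos]
      have hlt : g.natDegree < ((N₀:ℤ) - n).toNat := by omega
      rw [Polynomial.coeff_eq_zero_of_natDegree_lt hlt]
      norm_num
    · rw [dif_neg hpos]
      norm_num
  have hgt_dec : Tendsto gt cofinite (nhds 0) := by
    have hev : ∀ᶠ n in (cofinite : Filter ℤ), gt n = 0 :=
      Filter.eventually_cofinite.mpr hgt_fin
    exact tendsto_const_nhds.congr' (hev.mono fun n hn => hn.symm)
  -- the difference sequence solves the homogeneous equation and decays, so it vanishes
  set v : ℤ → ℂ := fun n => ((wt n - gt n : ℝ) : ℂ) with hv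
  have hv_dec : Tendsto v cofinite (nhds 0) := by
    have h1 : Tendsto (fun n => wt n - gt n) cofinite (nhds (0 - 0 : ℝ)) :=
      hwt_dec.sub hgt_dec
    rw [sub_zero] at h1
    have h2 := (Complex.continuous_ofReal.tendsto 0).comp h1
    rw [Complex.ofReal_zero] at h2
    exact h2
  set p : ℂ[X] := f.map (Int.castRingHom ℂ) with hp
  have hp0 : p ≠ 0 := (Polynomial.map_ne_zero_iff Int.cast_injective).mpr hf0
  have hpdeg : p.natDegree = m :=
    Polynomial.natDegree_map_eq_of_injective Int.cast_injective f
  have hker : (Polynomial.aeval Sh p) v = 0 := by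
    funext n
    rw [aeval_Sh_apply, hpdeg]
    have hco : ∀ k, p.coeff k = ((f.coeff k : ℤ) : ℂ) := fun k => by
      rw [hp, Polynomial.coeff_map]
      simp
    have hre : ∑ k ∈ Finset.range (m+1), (f.coeff k : ℝ) * (wt (n+k) - gt (n+k)) = 0 := by
      have : ∑ k ∈ Finset.range (m+1), (f.coeff k : ℝ) * (wt (n+k) - gt (n+k))
          = (∑ k ∈ Finset.range (m+1), (f.coeff k : ℝ) * wt (n+k))
            - ∑ k ∈ Finset.range (m+1), (f.coeff k : ℝ) * gt (n+k) := by
        rw [← Finset.sum_sub_distrib]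
        exact Finset.sum_congr rfl fun k _ => by ring
      rw [this, hfg_seq n]
      have hcn : ∑ k ∈ Finset.range (m+1), (f.coeff k : ℝ) * wt (n+k) = c n := by rw [hc]
      rw [hcn, sub_self]
    have : ∑ k ∈ Finset.range (m+1), p.coeff k * v (n + k)
        = ((∑ k ∈ Finset.range (m+1), (f.coeff k : ℝ) * (wt (n+k) - gt (n+k)) : ℝ) : ℂ) := by
      push_cast
      exact Finset.sum_congr rfl fun k _ => by rw [hco k, hv]; push_cast; ring
    rw [this, hre]
    norm_num
  have hv0 : v = 0 := homog_aux p.natDegree p hp0 rfl v hv_dec hker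
  -- endgame: wt n is an integer lying in (-1/2, 1/2], hence zero
  intro n
  have hwtgt : wt n = gt n := by
    have h1 := congrFun hv0 n
    rw [hv] at h1
    simp only [Pi.zero_apply] at h1
    have h2 : ((wt n - gt n : ℝ) : ℂ) = 0 := h1
    have h3 : (wt n - gt n : ℝ) = 0 := by exact_mod_cast h2
    linarith
  have hmem := hwt_mem n
  have hint2 : wt n = ((G ((N₀:ℤ) - n) : ℤ) : ℝ) := by rw [hwtgt, hgt]
  have hG0 : G ((N₀:ℤ) - n) = 0 := by
    have hl : (-(1/2):ℝ) < ((G ((N₀:ℤ) - n) : ℤ) : ℝ) := by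
      rw [← hint2]; exact hmem.1
    have hr : ((G ((N₀:ℤ) - n) : ℤ) : ℝ) ≤ (-(1/2)) + 1 := by
      rw [← hint2]; exact hmem.2
    have hza : (-1 : ℤ) < G ((N₀:ℤ) - n) := by
      exact_mod_cast (by linarith : (-1:ℝ) < ((G ((N₀:ℤ) - n) : ℤ) : ℝ))
    have hzb : G ((N₀:ℤ) - n) < 1 := by
      exact_mod_cast (by linarith : ((G ((N₀:ℤ) - n) : ℤ) : ℝ) < 1)
    omega
  rw [← hwt_coe n, hint2, hG0]
  norm_cast


/-- in the nonhyperbolic case, if `T` is a homeomorphism of a compact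
metrizable space `Y` whose homoclinic relation is topologically transitive, then every
continuous `(T, α_f)`-equivariant map `φ : Y → X_f` has as image a single fixed point. -/
theorem equivariant_image_singleton (f : Polynomial ℤ) (hm : 1 ≤ f.natDegree)
    (hlead : 0 < f.leadingCoeff) (h0 : f.coeff 0 ≠ 0)
    (hirr : Irreducible (Polynomial.toLaurent f)) (hnc : Noncyclotomic f)
    (hnonhyp : ∃ θ : ℂ, Polynomial.aeval θ f = 0 ∧ ‖θ‖ = 1)
    (Y : Type*) [MetricSpace Y] [CompactSpace Y]
    (T : Equiv.Perm Y) (hT : Continuous T) (hT' : Continuous T.symm)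
    (htrans : ∃ y : Y, Dense {y' : Y | HomoclinicPair T y y'})
    (φ : Y → (ℤ → Torus)) (hφc : Continuous φ)
    (hφX : ∀ y, φ y ∈ Xf f)
    (hφe : ∀ y, φ (T y) = shiftT (φ y)) :
    ∃ xbar : ℤ → Torus, xbar ∈ Xf f ∧ shiftT xbar = xbar ∧ ∀ y, φ y = xbar := by
  obtain ⟨y₀, hdense⟩ := htrans
  -- the orbit formula for coordinates
  have horb : ∀ (y : Y) (n : ℤ), ∀ j : ℤ, φ ((T^n) y) j = φ y (j + n) := by
    intro y n
    have hstep1 : ∀ (z : Y) (j : ℤ), φ (T z) j = φ z (j + 1) := by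
      intro z j
      rw [hφe z]
      rfl
    have hzp : ∀ n : ℤ, (T ^ (n+1)) y = T ((T^n) y) := by
      intro n
      rw [show (T^(n+1)) = T * T^n from by rw [← zpow_one_add]; congr 1; ring]
      rfl
    induction n using Int.induction_on with
    | zero => intro j; simp
    | succ k ihk =>
      intro j
      rw [hzp (k:ℤ), hstep1, ihk (j+1)]
      congr 1
      ring
    | pred k ihk =>
      intro j
      have h1 := hzp (-(k:ℤ)-1)
      rw [show (-(k:ℤ)-1+1) = -(k:ℤ) from by ring] at h1
      have h2 := hstep1 ((T ^ (-(k:ℤ)-1)) y) (j-1)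
      rw [← h1, ihk (j-1), show j - 1 + 1 = j from by ring] at h2
      rw [← h2]
      congr 1
      ring
  -- φ is constant on the homoclinic class of y₀
  have hconst : ∀ y' ∈ {y' | HomoclinicPair T y₀ y'}, φ y' = φ y₀ := by
    intro y' hy'
    have hy2 : Tendsto (fun n : ℤ => dist ((T ^ n) y₀) ((T ^ n) y')) cofinite (nhds 0) := hy'
    set wd : ℤ → Torus := fun n => φ y₀ n - φ y' n with hwd
    have hwX : ∀ n, fsT f wd n = 0 := by
      intro n
      have h1 := (hφX y₀) n
      have h2 := (hφX y') n
      rw [fsT] at h1 h2 ⊢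
      have : ∑ k ∈ Finset.range (f.natDegree + 1), f.coeff k • wd (n + (k:ℤ))
          = (∑ k ∈ Finset.range (f.natDegree + 1), f.coeff k • φ y₀ (n + (k:ℤ)))
            - ∑ k ∈ Finset.range (f.natDegree + 1), f.coeff k • φ y' (n + (k:ℤ)) := by
        rw [← Finset.sum_sub_distrib]
        exact Finset.sum_congr rfl fun k _ => by rw [hwd, smul_sub]
      rw [this, h1, h2, sub_zero]
    have hwdec : Tendsto wd cofinite (nhds (0 : Torus)) := by
      rw [tendsto_nhds]
      intro U hU h0U
      set g : Y × Y → Torus := fun ab => φ ab.1 0 - φ ab.2 0 with hg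
      have hgc : Continuous g :=
        ((continuous_apply (0:ℤ)).comp (hφc.comp continuous_fst)).sub
          ((continuous_apply (0:ℤ)).comp (hφc.comp continuous_snd))
      have hgwd : ∀ n : ℤ, g ((T^n) y₀, (T^n) y') = wd n := by
        intro n
        rw [hg]
        simp only []
        rw [horb y₀ n 0, horb y' n 0, zero_add, hwd]
      have hC : IsClosed {ab : Y × Y | g ab ∉ U} := by
        have : {ab : Y × Y | g ab ∉ U} = (g ⁻¹' U)ᶜ := rfl
        rw [this]
        exact (hU.preimage hgc).isClosed_compl
      have hCc : IsCompact {ab : Y × Y | g ab ∉ U} := hC.isCompact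
      by_cases hemp : {ab : Y × Y | g ab ∉ U} = ∅
      · apply Filter.Eventually.of_forall
        intro n
        by_contra hab
        have : ((T^n) y₀, (T^n) y') ∈ {ab : Y × Y | g ab ∉ U} := by
          simp only [Set.mem_setOf_eq, hgwd n]
          exact hab
        rw [hemp] at this
        exact this
      · obtain ⟨ab₀, hab₀, hmin⟩ := hCc.exists_isMinOn (Set.nonempty_iff_ne_empty.mpr hemp)
          ((continuous_dist.comp (continuous_fst.prodMk continuous_snd)).continuousOn)
        have hε : 0 < dist ab₀.1 ab₀.2 := by
          rw [dist_pos]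
          intro hne
          apply hab₀
          show g ab₀ ∈ U
          rw [hg]
          simp only []
          rw [hne, sub_self]
          exact h0U
        have hev : ∀ᶠ n in (cofinite : Filter ℤ),
            dist ((T^n) y₀) ((T^n) y') < dist ab₀.1 ab₀.2 :=
          hy2.eventually (eventually_lt_nhds hε)
        filter_upwards [hev] with n hn
        by_contra hnot
        have hmem : ((T^n) y₀, (T^n) y') ∈ {ab : Y × Y | g ab ∉ U} := by
          simp only [Set.mem_setOf_eq, hgwd n]
          exact hnot
        exact absurd (hmin hmem) (not_le.mpr hn)
    have hzero := key_triviality f hm h0 hirr hnonhyp wd hwX hwdec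
    funext n
    have hn := hzero n
    rw [hwd] at hn
    exact (sub_eq_zero.mp hn).symm
  have heq : φ = fun _ => φ y₀ := Continuous.ext_on hdense hφc continuous_const hconst
  refine ⟨φ y₀, hφX y₀, ?_, fun y => by rw [heq]⟩
  rw [← hφe y₀, heq]

end
end
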